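/- Let d ≥ 2 and k ≥ 1 be integers and let λ₁ ≥ λ₂ ≥ ⋯ ≥ λ_{d−1} ≥ 0 be integers with Σ_{j=1}^{d−1} λ_j = dk. Working in the d−1 variables x₁,…,x_{d−1}, let m₁,…,m_N be the list of all N = C((d−1)+k−1, k) monomials of degree k. Then d! · [Δ(x) · h_d(m₁,…,m_N)]_{(λ_j + (d−1) − j)_{j=1}^{d−1}} = Σ_{α ⊢ d} D_α · Σ_{π ∈ S_{d−1}} sgn(π) · N_α(k; (λ_j + π(j) − j)_{j=1}^{d−1}), where the inner count N_α is over a×(d−1) matrices, a = ℓ(α). (The left-hand side is d! times the multiplicity of the irreducible representation S^λ W in the plethysm S^d(S^k W).) -/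

import Mathlib

open MvPolynomial Finset

noncomputable section

/-- Complete homogeneous symmetric polynomial `h_d` evaluated at the family `y i`, `i ∈ s`:
the sum, over all multisets of size `d` with elements in `s`, of the corresponding products. -/
def hSum {ι : Type*} [DecidableEq ι] {R : Type*} [CommRing R]
    (d : ℕ) (s : Finset ι) (y : ι → R) : R :=
  ∑ t ∈ s.sym d, ((t : Multiset ι).map y).prod

/-- Elementary symmetric polynomial `e_d` evaluated at the family `y i`, `i ∈ s`. -/
def eSum {ι : Type*} [DecidableEq ι] {R : Type*} [CommRing R]
    (d : ℕ) (s : Finset ι) (y : ι → R) : R :=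
  ∑ t ∈ s.powersetCard d, ∏ i ∈ t, y i

/-- The monomial `x^c` in `m` variables. -/
def monom (m : ℕ) (c : Fin m → ℕ) : MvPolynomial (Fin m) ℤ := ∏ j, X j ^ c j

/-- `h_d` applied to the list of all monomials of degree `k` in `m` variables:
the character of `S^d(S^k W)` for `dim W = m`. -/
def charS (d k m : ℕ) : MvPolynomial (Fin m) ℤ :=
  hSum d (Finset.Nat.antidiagonalTuple m k) (monom m)

/-- `e_d` applied to the list of all monomials of degree `k` in `m` variables:
the character of `Λ^d(S^k W)` for `dim W = m`. -/
def charW (d k m : ℕ) : MvPolynomial (Fin m) ℤ :=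
  eSum d (Finset.Nat.antidiagonalTuple m k) (monom m)

/-- `h_k(x_1,…,x_m)`. -/
def hpoly (m k : ℕ) : MvPolynomial (Fin m) ℤ :=
  ∑ c ∈ Finset.Nat.antidiagonalTuple m k, monom m c

/-- `h_k(x_1^r,…,x_m^r)`. -/
def hkPow (m k r : ℕ) : MvPolynomial (Fin m) ℤ :=
  ∑ c ∈ Finset.Nat.antidiagonalTuple m k, ∏ j, X j ^ (r * c j)

/-- The Vandermonde product `Δ(x) = ∏_{i<j} (x_i - x_j)`. -/
def vand (m : ℕ) : MvPolynomial (Fin m) ℤ :=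
  ∏ p ∈ (Finset.univ : Finset (Fin m × Fin m)).filter (fun p => p.1 < p.2),
    (X p.1 - X p.2)

/-- The coefficient of the monomial with exponent vector `e`. -/
def coeffOf {m : ℕ} (e : Fin m → ℕ) (P : MvPolynomial (Fin m) ℤ) : ℤ :=
  MvPolynomial.coeff (Finsupp.equivFunOnFinite.symm e) P

/-- `N_α(k; μ)`: the number of `(α,μ)`-matrices, i.e. of nonnegative integral `a × m`
matrices all of whose row sums are `k` and whose `α`-weighted column sums are `μ`. -/
def Nmat {a m : ℕ} (α : Fin a → ℕ) (k : ℕ) (μ : Fin m → ℤ) : ℕ :=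
  Set.ncard {M : Fin a → Fin m → ℕ |
    (∀ i, ∑ j, M i j = k) ∧ ∀ j, ∑ i, (α i : ℤ) * (M i j : ℤ) = μ j}

/-- `N_α(k; μ)` for `α` given as a list. -/
def NmatL (αs : List ℕ) {m : ℕ} (k : ℕ) (μ : Fin m → ℤ) : ℕ :=
  Nmat (fun i : Fin αs.length => αs.get i) k μ

/-- `D_ρ`: the number of permutations in `S_d` of cycle type `ρ` (a partition of `d`);
Mathlib's `cycleType` records only the cycles of length at least 2. -/
def Dnum (d : ℕ) (ρ : Nat.Partition d) : ℕ :=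
  ((Finset.univ : Finset (Equiv.Perm (Fin d))).filter
    (fun σ => σ.cycleType = ρ.parts.filter (fun r => 2 ≤ r))).card



section Aux
open Equiv

lemma pair_prod {m : ℕ} {M : Type*} [CommMonoid M] (f : Fin m → Fin m → M) :
    ∏ p ∈ (Finset.univ : Finset (Fin m × Fin m)).filter (fun p => p.1 < p.2), f p.1 p.2
      = ∏ i, ∏ j ∈ Ioi i, f i j := by
  rw [Finset.prod_sigma']
  refine Finset.prod_nbij' (fun p => ⟨p.1, p.2⟩) (fun x => (x.1, x.2)) ?_ ?_ ?_ ?_ ?_ <;>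
    simp [Finset.mem_sigma, Finset.mem_Ioi]

lemma vand_eq_det (m : ℕ) :
    vand m = Matrix.det (Matrix.vandermonde (fun i : Fin m => (X i.rev : MvPolynomial (Fin m) ℤ))) := by
  rw [Matrix.det_vandermonde, ← pair_prod (fun i j => (X (Fin.rev j) - X (Fin.rev i) : MvPolynomial (Fin m) ℤ))]
  unfold vand
  refine Finset.prod_nbij' (fun p => (p.2.rev, p.1.rev)) (fun p => (p.2.rev, p.1.rev)) ?_ ?_ ?_ ?_ ?_ <;>
    simp [Fin.rev_lt_rev]

lemma vand_expand (m : ℕ) :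
    vand m = ∑ τ : Equiv.Perm (Fin m), (Equiv.Perm.sign τ : ℤ) •
      ∏ j, (X j : MvPolynomial (Fin m) ℤ) ^ (m - 1 - (τ j : ℕ)) := by
  rw [vand_eq_det, Matrix.det_apply]
  have hinv : Function.Involutive
      (fun σ : Equiv.Perm (Fin m) => Fin.revPerm * σ⁻¹ * Fin.revPerm) := by
    intro σ
    ext x
    simp
  refine Fintype.sum_equiv hinv.toPerm _ _ ?_
  intro σ
  have hsgn : Equiv.Perm.sign (Fin.revPerm * σ⁻¹ * Fin.revPerm : Equiv.Perm (Fin m))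
      = Equiv.Perm.sign σ := by
    rw [Equiv.Perm.sign_mul, Equiv.Perm.sign_mul, Equiv.Perm.sign_inv]
    rw [mul_comm, ← mul_assoc]
    rw [← Equiv.Perm.sign_mul]
    simp
  have hprod : (∏ i, Matrix.vandermonde (fun i : Fin m => (X i.rev : MvPolynomial (Fin m) ℤ)) (σ i) i)
      = ∏ j, (X j : MvPolynomial (Fin m) ℤ) ^ (m - 1 - (((Fin.revPerm * σ⁻¹ * Fin.revPerm : Equiv.Perm (Fin m)) j) : ℕ)) := by
    refine Fintype.prod_equiv (σ.trans Fin.revPerm) _ _ ?_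
    intro i
    simp only [Matrix.vandermonde_apply, Equiv.trans_apply, Fin.revPerm_apply,
      Equiv.Perm.coe_mul, Function.comp_apply, Equiv.Perm.inv_def, Equiv.symm_apply_apply, Fin.rev_rev]
    congr 1
    have h2 : ((Fin.rev i : Fin m) : ℕ) = m - 1 - (i : ℕ) := by
      have := Fin.val_rev i; omega
    have : (i : ℕ) ≤ m - 1 := by have := i.isLt; omega
    omega
  show _ • _ = _
  rw [hprod]
  simp only [Function.Involutive.coe_toPerm, hsgn]
  rw [Units.smul_def, zsmul_eq_mul]

lemma prod_X_pow_eq (m : ℕ) (v : Fin m → ℕ) :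
    (∏ j, (X j : MvPolynomial (Fin m) ℤ) ^ v j)
      = monomial (Finsupp.equivFunOnFinite.symm v) 1 := by
  rw [← prod_X_pow_eq_monomial]
  rw [← Finset.prod_subset (Finset.subset_univ (Finsupp.equivFunOnFinite.symm v).support)]
  · rfl
  · intro x _ hx
    simp only [Finsupp.notMem_support_iff] at hx
    rw [show v x = 0 from hx, pow_zero]

lemma Nmat_neg {a m : ℕ} (α : Fin a → ℕ) (k : ℕ) (μ : Fin m → ℤ) (j : Fin m) (h : μ j < 0) :
    Nmat α k μ = 0 := by
  unfold Nmat
  have hset : {M : Fin a → Fin m → ℕ |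
      (∀ i, ∑ j, M i j = k) ∧ ∀ j, ∑ i, (α i : ℤ) * (M i j : ℤ) = μ j} = (∅ : Set _) := by
    rw [Set.eq_empty_iff_forall_notMem]
    rintro M ⟨-, h2⟩
    have h3 := h2 j
    have h4 : (0:ℤ) ≤ ∑ i, (α i : ℤ) * (M i j : ℤ) := Finset.sum_nonneg fun i _ => by positivity
    omega
  rw [hset, Set.ncard_empty]

lemma Nmat_coeff {a m k : ℕ} (α : Fin a → ℕ) (ν : Fin m → ℕ) :
    (Nmat α k (fun j => (ν j : ℤ)) : ℤ) = coeffOf ν (∏ i, hkPow m k (α i)) := by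
  unfold hkPow coeffOf
  rw [Finset.prod_univ_sum]
  rw [MvPolynomial.coeff_sum]
  have key : ∀ M : Fin a → Fin m → ℕ,
      coeff (Finsupp.equivFunOnFinite.symm ν) (∏ i, ∏ j, (X j : MvPolynomial (Fin m) ℤ) ^ (α i * M i j))
        = if (∀ j, ∑ i, α i * M i j = ν j) then 1 else 0 := by
    intro M
    rw [Finset.prod_comm]
    have h1 : ∀ j : Fin m, (∏ i, (X j : MvPolynomial (Fin m) ℤ) ^ (α i * M i j))
        = X j ^ (∑ i, α i * M i j) := by
      intro j; rw [Finset.prod_pow_eq_pow_sum]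
    simp_rw [h1]
    rw [prod_X_pow_eq, coeff_monomial]
    congr 1
    rw [eq_iff_iff, Finsupp.equivFunOnFinite.symm.injective.eq_iff, funext_iff]
  simp_rw [key]
  rw [Finset.sum_boole]
  have hset : {M : Fin a → Fin m → ℕ |
      (∀ i, ∑ j, M i j = k) ∧ ∀ j, ∑ i, (α i : ℤ) * (M i j : ℤ) = (ν j : ℤ)}
      = ((Fintype.piFinset (fun _ : Fin a => Finset.Nat.antidiagonalTuple m k)).filter
          (fun M => ∀ j, ∑ i, α i * M i j = ν j) : Finset (Fin a → Fin m → ℕ)) := by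
    ext M
    simp only [Set.mem_setOf_eq, Finset.coe_filter, Fintype.mem_piFinset,
      Finset.Nat.mem_antidiagonalTuple]
    constructor
    · rintro ⟨hr, hc⟩
      exact ⟨hr, fun j => by exact_mod_cast hc j⟩
    · rintro ⟨hr, hc⟩
      exact ⟨hr, fun j => by exact_mod_cast congrArg (Nat.cast : ℕ → ℤ) (hc j)⟩
  unfold Nmat
  rw [hset, Set.ncard_coe_finset]

lemma coeff_vand_mul {m : ℕ} {a : ℕ} (α : Fin a → ℕ) (k : ℕ) (lam : ℕ → ℕ) :
    coeffOf (fun j : Fin m => lam (j:ℕ) + (m - 1 - (j:ℕ))) (vand m * ∏ i, hkPow m k (α i))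
      = ∑ τ : Equiv.Perm (Fin m), (Equiv.Perm.sign τ : ℤ) *
          (Nmat α k (fun j => (lam (j:ℕ) : ℤ) + ((τ j : ℕ) : ℤ) - ((j:ℕ) : ℤ)) : ℤ) := by
  set e : Fin m → ℕ := fun j => lam (j:ℕ) + (m - 1 - (j:ℕ)) with he
  rw [vand_expand, Finset.sum_mul]
  unfold coeffOf
  rw [MvPolynomial.coeff_sum]
  refine Finset.sum_congr rfl ?_
  intro τ _
  rw [smul_mul_assoc, MvPolynomial.coeff_smul, prod_X_pow_eq, coeff_monomial_mul']
  set v : Fin m → ℕ := fun j => m - 1 - (τ j : ℕ) with hv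
  have hτle : ∀ j : Fin m, (τ j : ℕ) ≤ m - 1 := fun j => by have := (τ j).isLt; omega
  have hjle : ∀ j : Fin m, (j : ℕ) ≤ m - 1 := fun j => by have := j.isLt; omega
  by_cases hle : Finsupp.equivFunOnFinite.symm v ≤ Finsupp.equivFunOnFinite.symm e
  · rw [if_pos hle, one_mul]
    have hle' : ∀ j, v j ≤ e j := fun j => Finsupp.le_def.mp hle j
    have hsub : Finsupp.equivFunOnFinite.symm e - Finsupp.equivFunOnFinite.symm v
        = Finsupp.equivFunOnFinite.symm (fun j => e j - v j) := by
      ext j; rw [Finsupp.tsub_apply]; rfl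
    rw [hsub]
    have hμ : (fun j : Fin m => ((e j - v j : ℕ) : ℤ))
        = fun j : Fin m => (lam (j:ℕ) : ℤ) + ((τ j : ℕ) : ℤ) - ((j:ℕ) : ℤ) := by
      funext j
      have h1 := hle' j
      have h2 := hτle j
      have h3 := hjle j
      simp only [he, hv] at h1 ⊢
      omega
    rw [smul_eq_mul]
    congr 1
    rw [← hμ, Nmat_coeff]
    rfl
  · rw [if_neg hle, smul_zero]
    have : ∃ j, e j < v j := by
      by_contra hc
      push_neg at hc
      exact hle (Finsupp.le_def.mpr fun j => hc j)
    obtain ⟨j, hj⟩ := this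
    have hz : Nmat α k (fun j => (lam (j:ℕ) : ℤ) + ((τ j : ℕ) : ℤ) - ((j:ℕ) : ℤ)) = 0 := by
      refine Nmat_neg α k _ j ?_
      have h2 := hτle j
      have h3 := hjle j
      simp only [he, hv] at hj
      omega
    rw [hz]
    simp

variable {d : ℕ}

def scSetoid (σ : Equiv.Perm (Fin d)) : Setoid (Fin d) :=
  ⟨σ.SameCycle, ⟨fun x => Equiv.Perm.SameCycle.refl σ x, fun h => h.symm, fun h1 h2 => h1.trans h2⟩⟩

instance scDec (σ : Equiv.Perm (Fin d)) : DecidableRel (scSetoid σ).r :=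
  fun x y => (inferInstance : Decidable (σ.SameCycle x y))

instance scQuotDec (σ : Equiv.Perm (Fin d)) : DecidableEq (Quotient (scSetoid σ)) :=
  fun a b => Quotient.recOnSubsingleton₂ a b fun x y => decidable_of_iff (σ.SameCycle x y) (by
    rw [Quotient.eq]; exact Iff.rfl)

instance scQuotFin (σ : Equiv.Perm (Fin d)) : Fintype (Quotient (scSetoid σ)) :=
  @Quotient.fintype _ _ (scSetoid σ) (fun x y => (inferInstance : Decidable (σ.SameCycle x y)))

def clsSize (σ : Equiv.Perm (Fin d)) (ω : Quotient (scSetoid σ)) : ℕ :=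
  (Finset.univ.filter (fun i => Quotient.mk (scSetoid σ) i = ω)).card

def fullParts (σ : Equiv.Perm (Fin d)) : Multiset ℕ :=
  σ.cycleType + Multiset.replicate (d - σ.cycleType.sum) 1

lemma sc_mem_support (σ : Equiv.Perm (Fin d)) {x y : Fin d} (h : σ.SameCycle x y)
    (hx : x ∈ σ.support) : y ∈ σ.support := by
  obtain ⟨n, rfl⟩ := h
  rwa [Equiv.Perm.zpow_apply_mem_support]

lemma sc_fixed (σ : Equiv.Perm (Fin d)) {x y : Fin d} (h : σ.SameCycle x y)
    (hx : x ∉ σ.support) : y = x := by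
  obtain ⟨n, rfl⟩ := h
  rw [Equiv.Perm.notMem_support] at hx
  rw [← Equiv.Perm.cycleOf_eq_one_iff] at hx
  rw [← Equiv.Perm.cycleOf_zpow_apply_self, hx]
  simp

lemma quot_eq_iff (σ : Equiv.Perm (Fin d)) (i x : Fin d) :
    Quotient.mk (scSetoid σ) i = Quotient.mk (scSetoid σ) x ↔ σ.SameCycle i x :=
  ⟨fun h => Quotient.exact h, fun h => Quotient.sound h⟩

lemma out_mk_sameCycle (σ : Equiv.Perm (Fin d)) (x : Fin d) :
    σ.SameCycle (Quotient.mk (scSetoid σ) x).out x :=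
  Quotient.exact (Quotient.out_eq (Quotient.mk (scSetoid σ) x))

lemma class_sizes (σ : Equiv.Perm (Fin d)) :
    (Finset.univ : Finset (Quotient (scSetoid σ))).val.map (clsSize σ) = fullParts σ := by
  classical
  set T : Quotient (scSetoid σ) → Prop := fun ω => ω.out ∈ σ.support with hT
  have hsplit : (Finset.univ : Finset (Quotient (scSetoid σ))).val
      = Multiset.filter T Finset.univ.val + Multiset.filter (fun ω => ¬ T ω) Finset.univ.val :=
    (Multiset.filter_add_not _ _).symm
  rw [hsplit, Multiset.map_add]
  unfold fullParts
  congr 1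
  -- touching part = cycleType
  · have hval : Multiset.filter T Finset.univ.val = (Finset.univ.filter T).val := rfl
    rw [hval]
    have hinj : Set.InjOn (fun ω : Quotient (scSetoid σ) => σ.cycleOf ω.out)
        (Finset.univ.filter T) := by
      intro ω1 h1 ω2 h2 heq
      simp only [Finset.coe_filter, Set.mem_setOf_eq] at h1 h2
      simp only at heq
      have hm1 : ω1.out ∈ (σ.cycleOf ω1.out).support :=
        Equiv.Perm.mem_support_cycleOf_iff.mpr ⟨Equiv.Perm.SameCycle.refl _ _, h1.2⟩
      rw [heq] at hm1
      have hsc : σ.SameCycle ω2.out ω1.out := (Equiv.Perm.mem_support_cycleOf_iff.mp hm1).1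
      rw [← Quotient.out_eq ω1, ← Quotient.out_eq ω2]
      exact Quotient.sound hsc.symm
    have himg : (Finset.univ.filter T).image (fun ω : Quotient (scSetoid σ) => σ.cycleOf ω.out)
        = σ.cycleFactorsFinset := by
      ext c
      simp only [Finset.mem_image, Finset.mem_filter, Finset.mem_univ, true_and]
      constructor
      · rintro ⟨ω, hω, rfl⟩
        exact Equiv.Perm.cycleOf_mem_cycleFactorsFinset_iff.mpr hω
      · intro hc
        have hcyc : c.IsCycle := (Equiv.Perm.mem_cycleFactorsFinset_iff.mp hc).1
        obtain ⟨x, hx⟩ := hcyc.nonempty_support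
        have hxs : x ∈ σ.support := Equiv.Perm.mem_cycleFactorsFinset_support_le hc hx
        refine ⟨Quotient.mk (scSetoid σ) x, ?_, ?_⟩
        · exact sc_mem_support σ (out_mk_sameCycle σ x).symm hxs
        · rw [Equiv.Perm.SameCycle.cycleOf_eq (out_mk_sameCycle σ x)]
          exact (Equiv.Perm.cycle_is_cycleOf hx hc).symm
    have hsz : ∀ ω ∈ Finset.univ.filter T,
        clsSize σ ω = ((fun ω : Quotient (scSetoid σ) => σ.cycleOf ω.out) ω).support.card := by
      intro ω hω
      simp only [Finset.mem_filter, Finset.mem_univ, true_and] at hω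
      unfold clsSize
      congr 1
      ext i
      simp only [Finset.mem_filter, Finset.mem_univ, true_and]
      rw [Equiv.Perm.mem_support_cycleOf_iff]
      constructor
      · intro h
        rw [← Quotient.out_eq ω] at h
        exact ⟨(Quotient.exact h : σ.SameCycle i ω.out).symm, hω⟩
      · rintro ⟨h1, -⟩
        rw [← Quotient.out_eq ω]
        exact Quotient.sound h1.symm
    calc (Finset.univ.filter T).val.map (clsSize σ)
        = (Finset.univ.filter T).val.map
            ((Finset.card ∘ Equiv.Perm.support) ∘ (fun ω : Quotient (scSetoid σ) => σ.cycleOf ω.out)) := by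
          apply Multiset.map_congr rfl
          intro ω hω
          exact hsz ω hω
      _ = ((Finset.univ.filter T).val.map (fun ω : Quotient (scSetoid σ) => σ.cycleOf ω.out)).map
            (Finset.card ∘ Equiv.Perm.support) := by rw [Multiset.map_map]
      _ = σ.cycleFactorsFinset.val.map (Finset.card ∘ Equiv.Perm.support) := by
          rw [← Finset.image_val_of_injOn hinj, himg]
      _ = σ.cycleType := rfl
  -- fixed part = replicate
  · have hval : Multiset.filter (fun ω => ¬ T ω) Finset.univ.val
        = (Finset.univ.filter (fun ω => ¬ T ω)).val := rfl
    rw [hval]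
    rw [Multiset.eq_replicate]
    constructor
    · rw [Multiset.card_map]
      have : (Finset.univ.filter (fun ω : Quotient (scSetoid σ) => ¬ T ω)).card
          = (σ.supportᶜ).card := by
        apply Finset.card_bij (fun ω _ => ω.out)
        · intro ω hω
          simp only [Finset.mem_filter, Finset.mem_univ, true_and] at hω
          simp only [Finset.mem_compl]
          exact hω
        · intro ω1 h1 ω2 h2 heq
          rw [← Quotient.out_eq ω1, ← Quotient.out_eq ω2, heq]
        · intro x hx
          simp only [Finset.mem_compl] at hx
          refine ⟨Quotient.mk (scSetoid σ) x, ?_, ?_⟩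
          · simp only [Finset.mem_filter, Finset.mem_univ, true_and, hT]
            intro hmem
            exact hx (sc_mem_support σ (out_mk_sameCycle σ x) hmem)
          · exact sc_fixed σ (out_mk_sameCycle σ x).symm hx
      show Finset.card _ = _
      rw [this, Finset.card_compl]
      simp [Equiv.Perm.sum_cycleType]
    · intro b hb
      rw [Multiset.mem_map] at hb
      obtain ⟨ω, hω, rfl⟩ := hb
      rw [Finset.mem_val, Finset.mem_filter] at hω
      obtain ⟨-, hω⟩ := hω
      unfold clsSize
      rw [Finset.card_eq_one]
      refine ⟨ω.out, ?_⟩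
      ext i
      simp only [Finset.mem_filter, Finset.mem_univ, true_and, Finset.mem_singleton]
      constructor
      · intro h
        rw [← Quotient.out_eq ω] at h
        exact sc_fixed σ (Quotient.exact h : σ.SameCycle i ω.out).symm hω
      · rintro rfl
        exact Quotient.out_eq ω

lemma invariant_const {ι : Type*} (σ : Equiv.Perm (Fin d)) (g : Fin d → ι)
    (hg : ∀ i, g (σ i) = g i) {x y : Fin d} (h : σ.SameCycle x y) : g x = g y := by
  obtain ⟨n, -, rfl⟩ := h.exists_pow_eq'
  induction n with
  | zero => simp
  | succ n ih =>
      rw [pow_succ', Equiv.Perm.mul_apply, hg]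
      exact ih ⟨n, rfl⟩

lemma invariant_sum {ι R : Type*} [DecidableEq ι] [CommRing R]
    (s : Finset ι) (y : ι → R) (σ : Equiv.Perm (Fin d)) :
    ∑ g ∈ (Fintype.piFinset fun _ : Fin d => s).filter (fun g => ∀ i, g (σ i) = g i),
        ∏ i, y (g i)
      = ((fullParts σ).map (fun r => ∑ v ∈ s, y v ^ r)).prod := by
  classical
  rw [show ((fullParts σ).map (fun r => ∑ v ∈ s, y v ^ r)).prod
      = ∏ ω : Quotient (scSetoid σ), ∑ v ∈ s, y v ^ clsSize σ ω by
    rw [← class_sizes σ, Multiset.map_map]; rfl]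
  rw [Finset.prod_univ_sum]
  refine Finset.sum_nbij' (fun g => fun ω : Quotient (scSetoid σ) => g ω.out)
    (fun h => fun x => h (Quotient.mk (scSetoid σ) x)) ?_ ?_ ?_ ?_ ?_
  · intro g hg
    rw [Finset.mem_filter, Fintype.mem_piFinset] at hg
    rw [Fintype.mem_piFinset]
    exact fun ω => hg.1 ω.out
  · intro h hh
    rw [Fintype.mem_piFinset] at hh
    rw [Finset.mem_filter, Fintype.mem_piFinset]
    refine ⟨fun i => hh _, fun i => ?_⟩
    have h2 : Quotient.mk (scSetoid σ) (σ i) = Quotient.mk (scSetoid σ) i :=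
      Quotient.sound ⟨-1, by simp⟩
    exact congrArg h h2
  · intro g hg
    rw [Finset.mem_filter] at hg
    funext x
    exact invariant_const σ g hg.2 (out_mk_sameCycle σ x)
  · intro h hh
    funext ω
    simp [Quotient.out_eq]
  · intro g hg
    rw [Finset.mem_filter] at hg
    have hprod : ∀ i : Fin d, y (g i) = y (g (Quotient.mk (scSetoid σ) i).out) := by
      intro i
      rw [invariant_const σ g hg.2 (out_mk_sameCycle σ i)]
    calc ∏ i, y (g i) = ∏ i : Fin d, y (g (Quotient.mk (scSetoid σ) i).out) :=
          Finset.prod_congr rfl fun i _ => hprod i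
      _ = ∏ ω : Quotient (scSetoid σ), y (g ω.out) ^ clsSize σ ω := by
          rw [Finset.prod_comp (fun ω : Quotient (scSetoid σ) => y (g ω.out))
            (fun i => Quotient.mk (scSetoid σ) i)]
          have himg : Finset.image (fun i => Quotient.mk (scSetoid σ) i) Finset.univ
              = Finset.univ := by
            apply Finset.eq_univ_of_forall
            intro ω
            rw [Finset.mem_image]
            exact ⟨ω.out, Finset.mem_univ _, Quotient.out_eq ω⟩
          rw [himg]
          rfl

variable {ι : Type*} [DecidableEq ι]

-- exists base function with given value multiset
lemma exists_fun_of_sym (s : Finset ι) (t : Sym ι d) (ht : t ∈ s.sym d) :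
    ∃ g₀ : Fin d → ι, (∀ i, g₀ i ∈ s) ∧ Finset.univ.val.map g₀ = (t : Multiset ι) := by
  have hcard : Multiset.card (t : Multiset ι) = d := t.2
  set l := (t : Multiset ι).toList with hl
  have hlen : l.length = d := by rw [hl, Multiset.length_toList, hcard]
  refine ⟨fun i => l.get (Fin.cast hlen.symm i), ?_, ?_⟩
  · intro i
    have : l.get (Fin.cast hlen.symm i) ∈ (t : Multiset ι) := by
      rw [← Multiset.mem_toList]
      exact l.get_mem _
    exact (Finset.mem_sym_iff.mp ht) _ this
  · rw [Fin.univ_val_map]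
    have : List.ofFn (fun i : Fin d => l.get (Fin.cast hlen.symm i)) = l := by
      apply List.ext_get
      · simp [hlen]
      · intro n h1 h2
        simp [List.get_ofFn]
    rw [this, hl]
    exact Multiset.coe_toList _

def stabcard (g : Fin d → ι) : ℕ :=
  (Finset.univ.filter (fun σ : Equiv.Perm (Fin d) => ∀ i, g (σ i) = g i)).card

lemma perm_map_univ (τ : Equiv.Perm (Fin d)) :
    (Finset.univ : Finset (Fin d)).val.map τ = (Finset.univ : Finset (Fin d)).val := by
  have h1 : Finset.image τ Finset.univ = Finset.univ := Finset.image_univ_equiv τ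
  have h2 := Finset.image_val_of_injOn (f := (τ : Fin d → Fin d)) (s := Finset.univ)
    (fun a _ b _ h => τ.injective h)
  rw [h1] at h2
  exact h2.symm

-- the fiber over t is the orbit of g₀
lemma fiber_eq_orbit (s : Finset ι) (g₀ : Fin d → ι) (hg₀s : ∀ i, g₀ i ∈ s) :
    (Fintype.piFinset fun _ : Fin d => s).filter
        (fun g => Finset.univ.val.map g = Finset.univ.val.map g₀)
      = Finset.image (fun τ : Equiv.Perm (Fin d) => g₀ ∘ τ) Finset.univ := by
  ext g
  simp only [Finset.mem_filter, Fintype.mem_piFinset, Finset.mem_image, Finset.mem_univ, true_and]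
  constructor
  · rintro ⟨hgs, hmap⟩
    have hcnt : ∀ v : ι, Fintype.card {i // g i = v} = Fintype.card {i // g₀ i = v} := by
      intro v
      have h1 : ∀ h : Fin d → ι, Fintype.card {i // h i = v}
          = Multiset.count v (Finset.univ.val.map h) := by
        intro h
        rw [Fintype.card_subtype, Multiset.count_map]
        rw [Multiset.filter_congr (fun x _ => (eq_comm : v = h x ↔ h x = v))]
        rfl
      rw [h1 g, h1 g₀, hmap]
    set e : ∀ v : ι, {i // g i = v} ≃ {i // g₀ i = v} :=
      fun v => Fintype.equivOfCardEq (hcnt v) with he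
    refine ⟨(Equiv.sigmaFiberEquiv g).symm.trans
      ((Equiv.sigmaCongrRight e).trans (Equiv.sigmaFiberEquiv g₀)), ?_⟩
    funext i
    simp only [Function.comp_apply, Equiv.trans_apply, Equiv.sigmaFiberEquiv,
      Equiv.sigmaCongrRight, Equiv.coe_fn_symm_mk, Equiv.coe_fn_mk]
    exact ((e (g i)) ⟨i, rfl⟩).2
  · rintro ⟨τ, rfl⟩
    refine ⟨fun i => hg₀s _, ?_⟩
    have : Finset.univ.val.map (g₀ ∘ τ) = (Finset.univ.val.map τ).map g₀ := by
      rw [Multiset.map_map]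
    rw [this, perm_map_univ]

lemma stabcard_comp (g₀ : Fin d → ι) (τ : Equiv.Perm (Fin d)) :
    stabcard (g₀ ∘ τ) = stabcard g₀ := by
  unfold stabcard
  apply Finset.card_bij' (fun σ _ => τ * σ * τ⁻¹) (fun σ _ => τ⁻¹ * σ * τ)
  · intro σ hσ
    simp only [Finset.mem_filter, Finset.mem_univ, true_and] at hσ ⊢
    intro i
    have h1 := hσ (τ⁻¹ i)
    simp only [Function.comp_apply] at h1
    simp only [Equiv.Perm.mul_apply]
    rw [h1]
    simp
  · intro σ hσ
    simp only [Finset.mem_filter, Finset.mem_univ, true_and] at hσ ⊢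
    intro i
    have h1 := hσ (τ i)
    simp only [Equiv.Perm.mul_apply, Function.comp_apply] at h1 ⊢
    simpa using h1
  · intro σ _; group
  · intro σ _; group

lemma count_fiber (s : Finset ι) (g₀ : Fin d → ι) (hg₀s : ∀ i, g₀ i ∈ s) :
    ∑ g ∈ (Fintype.piFinset fun _ : Fin d => s).filter
        (fun g => Finset.univ.val.map g = Finset.univ.val.map g₀),
      stabcard g = d.factorial := by
  rw [fiber_eq_orbit s g₀ hg₀s]
  have hconst : ∀ g ∈ Finset.image (fun τ : Equiv.Perm (Fin d) => g₀ ∘ τ) Finset.univ,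
      stabcard g = stabcard g₀ := by
    rintro g hg
    rw [Finset.mem_image] at hg
    obtain ⟨τ, -, rfl⟩ := hg
    exact stabcard_comp g₀ τ
  rw [Finset.sum_congr rfl hconst, Finset.sum_const, smul_eq_mul]
  -- card image * stabcard g₀ = d!
  have hcard : (Finset.univ : Finset (Equiv.Perm (Fin d))).card
      = (Finset.image (fun τ : Equiv.Perm (Fin d) => g₀ ∘ τ) Finset.univ).card * stabcard g₀ := by
    rw [Finset.card_eq_sum_card_fiberwise
      (f := fun τ : Equiv.Perm (Fin d) => g₀ ∘ τ)
      (t := Finset.image (fun τ : Equiv.Perm (Fin d) => g₀ ∘ τ) Finset.univ)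
      (fun τ _ => Finset.mem_image_of_mem _ (Finset.mem_univ τ))]
    rw [Finset.sum_congr rfl (fun g hg => ?_), Finset.sum_const, smul_eq_mul]
    rw [Finset.mem_image] at hg
    obtain ⟨τ₀, -, rfl⟩ := hg
    unfold stabcard
    apply Finset.card_bij' (fun τ _ => τ * τ₀⁻¹) (fun ρ _ => ρ * τ₀)
    · intro τ hτ
      simp only [Finset.mem_filter, Finset.mem_univ, true_and] at hτ ⊢
      intro i
      have h1 := congrFun hτ (τ₀⁻¹ i)
      simp only [Function.comp_apply, Equiv.Perm.mul_apply] at h1 ⊢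
      rw [h1]
      simp
    · intro ρ hρ
      simp only [Finset.mem_filter, Finset.mem_univ, true_and] at hρ ⊢
      funext i
      simp only [Function.comp_apply, Equiv.Perm.mul_apply]
      exact hρ (τ₀ i)
    · intro τ _; group
    · intro ρ _; group
  have : (Finset.univ : Finset (Equiv.Perm (Fin d))).card = d.factorial := by
    simp [Finset.card_univ, Fintype.card_perm, Fintype.card_fin]
  omega

lemma cycle_index {R : Type*} [CommRing R] (d : ℕ) (s : Finset ι) (y : ι → R) :
    d.factorial • (∑ t ∈ s.sym d, ((t : Multiset ι).map y).prod)
      = ∑ σ : Equiv.Perm (Fin d), ((fullParts σ).map (fun r => ∑ v ∈ s, y v ^ r)).prod := by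
  classical
  have step1 : ∑ σ : Equiv.Perm (Fin d), ((fullParts σ).map (fun r => ∑ v ∈ s, y v ^ r)).prod
      = ∑ σ : Equiv.Perm (Fin d),
          ∑ g ∈ (Fintype.piFinset fun _ : Fin d => s).filter (fun g => ∀ i, g (σ i) = g i),
            ∏ i, y (g i) := by
    exact Finset.sum_congr rfl fun σ _ => (invariant_sum s y σ).symm
  rw [step1]
  have step2 : ∑ σ : Equiv.Perm (Fin d),
      ∑ g ∈ (Fintype.piFinset fun _ : Fin d => s).filter (fun g => ∀ i, g (σ i) = g i),
        ∏ i, y (g i)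
      = ∑ g ∈ (Fintype.piFinset fun _ : Fin d => s), stabcard g • ∏ i, y (g i) := by
    simp_rw [Finset.sum_filter]
    rw [Finset.sum_comm]
    refine Finset.sum_congr rfl fun g _ => ?_
    rw [← Finset.sum_filter, Finset.sum_const]
    rfl
  rw [step2]
  rw [← Finset.sum_fiberwise_of_maps_to
    (g := fun g : Fin d → ι => (Sym.mk (Finset.univ.val.map g) (by simp) : Sym ι d))
    (t := s.sym d) ?_ (fun g => stabcard g • ∏ i, y (g i))]
  · rw [Finset.smul_sum]
    refine Finset.sum_congr rfl fun t ht => ?_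
    obtain ⟨g₀, hg₀s, hg₀⟩ := exists_fun_of_sym s t ht
    have hcond : ∀ g : Fin d → ι,
        ((Sym.mk (Finset.univ.val.map g) (by simp) : Sym ι d) = t)
          ↔ Finset.univ.val.map g = Finset.univ.val.map g₀ := by
      intro g
      constructor
      · intro h
        rw [hg₀]
        exact congrArg Subtype.val h
      · intro h
        apply Subtype.ext
        show Finset.univ.val.map g = (t : Multiset ι)
        rw [h, hg₀]
    have hval : ∀ g ∈ (Fintype.piFinset fun _ : Fin d => s).filter
        (fun g => (Sym.mk (Finset.univ.val.map g) (by simp) : Sym ι d) = t),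
        (stabcard g • ∏ i, y (g i)) = stabcard g • ((t : Multiset ι).map y).prod := by
      intro g hg
      rw [Finset.mem_filter] at hg
      have h1 : (∏ i, y (g i)) = ((Finset.univ.val.map g).map y).prod := by
        rw [Multiset.map_map]; rfl
      have h2 := (hcond g).mp hg.2
      rw [h1, h2, hg₀]
    rw [Finset.sum_congr rfl hval, ← Finset.sum_smul]
    congr 1
    rw [Finset.filter_congr (fun g _ => hcond g)]
    exact (count_fiber s g₀ hg₀s).symm
  · intro g hg
    rw [Fintype.mem_piFinset] at hg
    rw [Finset.mem_sym_iff]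
    intro a ha
    simp only [Sym.mem_mk, Multiset.mem_map] at ha
    obtain ⟨i, -, rfl⟩ := ha
    exact hg i

def toPart {d : ℕ} (σ : Equiv.Perm (Fin d)) : Nat.Partition d where
  parts := fullParts σ
  parts_pos := by
    intro i hi
    unfold fullParts at hi
    rw [Multiset.mem_add] at hi
    rcases hi with h | h
    · have := Equiv.Perm.two_le_of_mem_cycleType h; omega
    · rw [Multiset.eq_of_mem_replicate h]; omega
  parts_sum := by
    unfold fullParts
    rw [Multiset.sum_add, Multiset.sum_replicate, smul_eq_mul, mul_one]
    have h1 : σ.cycleType.sum ≤ d := by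
      rw [Equiv.Perm.sum_cycleType]
      have := Finset.card_le_univ σ.support
      simpa using this
    omega

lemma toPart_eq_iff {d : ℕ} (σ : Equiv.Perm (Fin d)) (α : Nat.Partition d) :
    toPart σ = α ↔ σ.cycleType = α.parts.filter (fun r => 2 ≤ r) := by
  constructor
  · rintro rfl
    show σ.cycleType = (fullParts σ).filter (fun r => 2 ≤ r)
    unfold fullParts
    rw [Multiset.filter_add]
    rw [Multiset.filter_eq_self.mpr (fun a ha => Equiv.Perm.two_le_of_mem_cycleType ha)]
    have h2 : Multiset.filter (fun r => 2 ≤ r) (Multiset.replicate (d - σ.cycleType.sum) 1)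
        = 0 := by
      rw [Multiset.filter_eq_nil]
      intro a ha
      rw [Multiset.eq_of_mem_replicate ha]
      omega
    rw [h2, add_zero]
  · intro h
    have hparts : fullParts σ = α.parts := by
      unfold fullParts
      rw [h]
      have hsplit := Multiset.filter_add_not (fun r => 2 ≤ r) α.parts
      set m2 := Multiset.filter (fun r => ¬ 2 ≤ r) α.parts with hm2
      have hall : ∀ x ∈ m2, x = 1 := by
        intro x hx
        rw [hm2, Multiset.mem_filter] at hx
        have := α.parts_pos hx.1
        omega
      have hrep : m2 = Multiset.replicate (Multiset.card m2) 1 :=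
        Multiset.eq_replicate_card.mpr hall
      have h5 : m2.sum = Multiset.card m2 := by
        conv_lhs => rw [hrep]
        rw [Multiset.sum_replicate, smul_eq_mul, mul_one]
      have hsum : (Multiset.filter (fun r => 2 ≤ r) α.parts).sum + Multiset.card m2 = d := by
        have h3 := congrArg Multiset.sum hsplit
        rw [Multiset.sum_add, h5] at h3
        have h4 := α.parts_sum
        omega
      have hcard : Multiset.card m2 = d - (Multiset.filter (fun r => 2 ≤ r) α.parts).sum := by
        omega
      calc Multiset.filter (fun r => 2 ≤ r) α.parts
            + Multiset.replicate (d - (Multiset.filter (fun r => 2 ≤ r) α.parts).sum) 1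
          = Multiset.filter (fun r => 2 ≤ r) α.parts + m2 := by rw [hrep, hcard]
        _ = α.parts := hsplit
    exact Nat.Partition.ext hparts

lemma regroup {d : ℕ} {M : Type*} [AddCommMonoid M] (F : Multiset ℕ → M) :
    ∑ σ : Equiv.Perm (Fin d), F (fullParts σ)
      = ∑ α : Nat.Partition d, Dnum d α • F α.parts := by
  classical
  rw [← Finset.sum_fiberwise_of_maps_to (g := fun σ : Equiv.Perm (Fin d) => toPart σ)
    (t := Finset.univ) (fun σ _ => Finset.mem_univ _) (fun σ => F (fullParts σ))]
  refine Finset.sum_congr rfl fun α _ => ?_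
  have hcongr : ∀ σ ∈ Finset.univ.filter (fun σ : Equiv.Perm (Fin d) => toPart σ = α),
      F (fullParts σ) = F α.parts := by
    intro σ hσ
    rw [Finset.mem_filter] at hσ
    rw [show fullParts σ = (toPart σ).parts from rfl, hσ.2]
  rw [Finset.sum_congr rfl hcongr, Finset.sum_const]
  congr 1
  unfold Dnum
  apply Finset.card_nbij (fun σ => σ) (fun σ hσ => ?_) (fun a _ b _ h => h) (fun σ hσ => ?_)
  · rw [Finset.mem_coe, Finset.mem_filter] at hσ ⊢
    exact ⟨hσ.1, (toPart_eq_iff σ α).mp hσ.2⟩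
  · simp only [Finset.coe_filter, Set.mem_setOf_eq] at hσ
    refine ⟨σ, ?_, rfl⟩
    simp only [Finset.coe_filter, Set.mem_setOf_eq]
    exact ⟨hσ.1, (toPart_eq_iff σ α).mpr hσ.2⟩

end Aux

/-- Expansion of `d! ·` (multiplicity of `S^λ` in `S^d(S^k W)`) as a signed sum of
shifted matrix counts over partitions `α ⊢ d` and permutations of `S_{d-1}`. -/
theorem plethysm_sym_formula (d k : ℕ) (hd : 2 ≤ d) (hk : 1 ≤ k)
    (lam : ℕ → ℕ) (hanti : ∀ i j : ℕ, i ≤ j → lam j ≤ lam i)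
    (hsupp : ∀ i : ℕ, d - 1 ≤ i → lam i = 0)
    (hsum : ∑ i ∈ Finset.range (d - 1), lam i = d * k) :
    (d.factorial : ℤ) *
        coeffOf (fun j : Fin (d - 1) => lam (j : ℕ) + (d - 2 - (j : ℕ)))
          (vand (d - 1) * charS d k (d - 1))
      = ∑ α : Nat.Partition d, (Dnum d α : ℤ) *
          ∑ π : Equiv.Perm (Fin (d - 1)), (Equiv.Perm.sign π : ℤ) *
            (NmatL α.parts.toList k
              (fun j : Fin (d - 1) =>
                (lam (j : ℕ) : ℤ) + ((π j : ℕ) : ℤ) - ((j : ℕ) : ℤ)) : ℤ) := by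
  classical
  set m := d - 1 with hm
  have prod_list : ∀ P : Multiset ℕ, ((P.map (hkPow m k)).prod)
      = ∏ i : Fin P.toList.length, hkPow m k (P.toList.get i) := by
    intro P
    conv_lhs => rw [← Multiset.coe_toList P]
    rw [Multiset.map_coe, Multiset.prod_coe]
    rw [show P.toList.map (hkPow m k) = List.ofFn (fun i => hkPow m k (P.toList.get i)) by
      conv_lhs => rw [← List.ofFn_get P.toList]
      rw [List.map_ofFn]
      rfl, List.prod_ofFn]
  have hkPow_eq : ∀ r : ℕ, (∑ c ∈ Finset.Nat.antidiagonalTuple m k, monom m c ^ r)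
      = hkPow m k r := by
    intro r
    unfold monom hkPow
    refine Finset.sum_congr rfl fun c _ => ?_
    rw [← Finset.prod_pow]
    exact Finset.prod_congr rfl fun j _ => by rw [← pow_mul, mul_comm]
  have stepB : d.factorial • charS d k m
      = ∑ σ : Equiv.Perm (Fin d), ((fullParts σ).map (hkPow m k)).prod := by
    unfold charS hSum
    rw [cycle_index d (Finset.Nat.antidiagonalTuple m k) (monom m)]
    refine Finset.sum_congr rfl fun σ _ => ?_
    exact congrArg Multiset.prod (Multiset.map_congr rfl fun r _ => hkPow_eq r)
  have he : (fun j : Fin m => lam (j:ℕ) + (d - 2 - (j:ℕ)))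
      = (fun j : Fin m => lam (j:ℕ) + (m - 1 - (j:ℕ))) := by
    funext j
    have h2 : d - 2 = m - 1 := by omega
    rw [h2]
  have lhs1 : (d.factorial : ℤ) * coeffOf (fun j : Fin m => lam (j:ℕ) + (d - 2 - (j:ℕ)))
        (vand m * charS d k m)
      = ∑ σ : Equiv.Perm (Fin d),
          coeffOf (fun j : Fin m => lam (j:ℕ) + (m - 1 - (j:ℕ)))
            (vand m * ((fullParts σ).map (hkPow m k)).prod) := by
    rw [he]
    have h1 : (d.factorial : ℤ) * coeffOf (fun j : Fin m => lam (j:ℕ) + (m - 1 - (j:ℕ)))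
          (vand m * charS d k m)
        = coeffOf (fun j : Fin m => lam (j:ℕ) + (m - 1 - (j:ℕ)))
            (vand m * (d.factorial • charS d k m)) := by
      rw [mul_smul_comm]
      unfold coeffOf
      rw [MvPolynomial.coeff_smul, nsmul_eq_mul]
    rw [h1, stepB, Finset.mul_sum]
    unfold coeffOf
    rw [MvPolynomial.coeff_sum]
  rw [lhs1]
  have perσ : ∀ σ : Equiv.Perm (Fin d),
      coeffOf (fun j : Fin m => lam (j:ℕ) + (m - 1 - (j:ℕ)))
          (vand m * ((fullParts σ).map (hkPow m k)).prod)
        = ∑ τ : Equiv.Perm (Fin m), (Equiv.Perm.sign τ : ℤ) *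
            (NmatL (fullParts σ).toList k
              (fun j : Fin m => (lam (j:ℕ) : ℤ) + ((τ j : ℕ) : ℤ) - ((j:ℕ) : ℤ)) : ℤ) := by
    intro σ
    rw [prod_list (fullParts σ)]
    exact coeff_vand_mul (fun i => (fullParts σ).toList.get i) k lam
  rw [Finset.sum_congr rfl (fun σ _ => perσ σ)]
  rw [regroup (fun P : Multiset ℕ => ∑ τ : Equiv.Perm (Fin m), (Equiv.Perm.sign τ : ℤ) *
      (NmatL P.toList k
        (fun j : Fin m => (lam (j:ℕ) : ℤ) + ((τ j : ℕ) : ℤ) - ((j:ℕ) : ℤ)) : ℤ))]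
  refine Finset.sum_congr rfl fun α _ => ?_
  rw [nsmul_eq_mul]
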